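/- arXiv:1503.07962 — 2 statements merged into one kernel-verified Lean document; each statement's English description precedes it below -/
import Mathlib

section
/- For real numbers a, b, c with 0 < b and b < c, and for t in the open unit interval (in fact for |t|<1), Euler's integral representation holds: B(b, c-b) · ₂F₁(a, b; c; t) = ∫₀¹ (1 - t·x)^(−a) · x^(b−1) · (1−x)^(c−b−1) dx, where ₂F₁ is the Gauss hypergeometric series ∑ₙ (a)ₙ(b)ₙ/((c)ₙ n!) tⁿ and B is the Beta function. -/
open scoped BigOperators
open Real MeasureTheory Filter Set

noncomputable def poch (a : ℝ) (n : ℕ) : ℝ := ∏ i ∈ Finset.range n, (a + i)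

noncomputable def F21 (a b c t : ℝ) : ℝ :=
  ∑' n : ℕ, poch a n * poch b n / (poch c n * n.factorial) * t ^ n

noncomputable def F32 (a b c d e t : ℝ) : ℝ :=
  ∑' n : ℕ, poch a n * poch b n * poch c n / (poch d n * poch e n * n.factorial) * t ^ n

noncomputable def Beta (x y : ℝ) : ℝ := Real.Gamma x * Real.Gamma y / Real.Gamma (x + y)

lemma poch_zero (a : ℝ) : poch a 0 = 1 := by simp [poch]

lemma poch_succ (a : ℝ) (n : ℕ) : poch a (n + 1) = poch a n * (a + n) := by
  simp [poch, Finset.prod_range_succ]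

lemma poch_pos {a : ℝ} (ha : 0 < a) (n : ℕ) : 0 < poch a n := by
  apply Finset.prod_pos
  intro i _
  positivity

lemma abs_poch_le (a : ℝ) (n : ℕ) : |poch a n| ≤ poch (|a| + 1) n := by
  rw [poch, poch, Finset.abs_prod]
  apply Finset.prod_le_prod (fun i _ => abs_nonneg _)
  intro i _
  calc |a + (i:ℝ)| ≤ |a| + i := by
        refine (abs_add_le _ _).trans ?_
        simp [abs_of_nonneg (Nat.cast_nonneg i : (0:ℝ) ≤ i)]
    _ ≤ |a| + 1 + i := by linarith

/-- key summability -/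
lemma summable_poch (A : ℝ) (hA : 0 < A) {r : ℝ} (hr0 : 0 < r) (hr1 : r < 1) :
    Summable (fun n : ℕ => poch A n / n.factorial * r ^ n) := by
  have hpos : ∀ n : ℕ, 0 < poch A n / n.factorial * r ^ n := by
    intro n
    have := poch_pos hA n
    positivity
  apply summable_of_ratio_test_tendsto_lt_one hr1
  · exact Filter.Eventually.of_forall (fun n => (hpos n).ne')
  · have h1 : ∀ n : ℕ, ‖poch A (n+1) / (n+1).factorial * r ^ (n+1)‖ /
        ‖poch A n / n.factorial * r ^ n‖ = (A + n) / (n + 1) * r := by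
      intro n
      rw [Real.norm_eq_abs, Real.norm_eq_abs, abs_of_pos (hpos _), abs_of_pos (hpos _),
        poch_succ, Nat.factorial_succ, pow_succ]
      have h2 : (0:ℝ) < poch A n := poch_pos hA n
      have h3 : (0:ℝ) < (n.factorial : ℝ) := by positivity
      field_simp
      push_cast
      ring
    simp_rw [h1]
    have : Filter.Tendsto (fun n : ℕ => (A + n) / (n + 1)) atTop (nhds 1) := by
      have heq : ∀ n : ℕ, (A + n) / ((n:ℝ) + 1) = 1 + (A - 1) * (1 / ((n:ℝ) + 1)) := by
        intro n
        have : ((n:ℝ) + 1) ≠ 0 := by positivity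
        field_simp
        ring
      simp_rw [heq]
      have := tendsto_one_div_add_atTop_nhds_zero_nat (𝕜 := ℝ)
      have h4 := this.const_mul (A - 1)
      have h5 := h4.const_add (1:ℝ)
      simpa using h5
    have := this.mul_const r
    simpa using this

lemma poch_front (A : ℝ) (n : ℕ) : poch A (n + 1) = A * poch (A + 1) n := by
  rw [poch, poch, Finset.prod_range_succ']
  simp only [Nat.cast_zero, add_zero, Nat.cast_add, Nat.cast_one]
  rw [mul_comm]
  congr 1
  apply Finset.prod_congr rfl
  intro i _
  ring

lemma summable_binom (a : ℝ) {u : ℝ} (hu : |u| < 1) :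
    Summable (fun n : ℕ => poch a n / n.factorial * u ^ n) := by
  set r : ℝ := (|u| + 1) / 2 with hr
  have hur : |u| < r := by rw [hr]; linarith [abs_nonneg u]
  have hr0 : 0 < r := lt_of_le_of_lt (abs_nonneg u) hur
  have hr1 : r < 1 := by rw [hr]; linarith
  apply Summable.of_norm_bounded (summable_poch (|a| + 1) (by positivity) hr0 hr1)
  intro n
  rw [Real.norm_eq_abs, abs_mul, abs_div, abs_pow,
    abs_of_pos (show (0:ℝ) < n.factorial by positivity)]
  have h1 : |poch a n| ≤ poch (|a| + 1) n := abs_poch_le a n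
  have hfac : (0:ℝ) < n.factorial := by positivity
  have h5 : (0:ℝ) ≤ poch (|a| + 1) n / n.factorial := by
    have := poch_pos (show (0:ℝ) < |a|+1 by positivity) n
    positivity
  gcongr


noncomputable def ubnd (a r : ℝ) : ℕ → ℝ
  | 0 => 0
  | n + 1 => poch (|a| + 1) (n + 1) / n.factorial * r ^ n

lemma summable_ubnd (a : ℝ) {r : ℝ} (hr0 : 0 < r) (hr1 : r < 1) : Summable (ubnd a r) := by
  rw [← summable_nat_add_iff 1]
  have : (fun n => ubnd a r (n + 1))
      = fun n : ℕ => (|a| + 1) * (poch (|a| + 2) n / n.factorial * r ^ n) := by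
    funext n
    show poch (|a| + 1) (n + 1) / n.factorial * r ^ n = _
    rw [poch_front]
    have h : |a| + 1 + 1 = |a| + 2 := by ring
    rw [h]
    ring
  rw [this]
  exact (summable_poch (|a| + 2) (by positivity) hr0 hr1).mul_left _

lemma deriv_bound (a : ℝ) {r y : ℝ} (hy : |y| ≤ r) (n : ℕ) :
    ‖poch a n / n.factorial * ((n : ℝ) * y ^ (n - 1))‖ ≤ ubnd a r n := by
  match n with
  | 0 => simp [ubnd]
  | n + 1 =>
    have hr0 : 0 ≤ r := le_trans (abs_nonneg y) hy
    have goal : ‖poch a (n+1) / ((n+1).factorial : ℝ) * ((((n:ℝ)) + 1) * y ^ n)‖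
        ≤ poch (|a| + 1) (n + 1) / n.factorial * r ^ n := by
      rw [Real.norm_eq_abs, abs_mul, abs_mul, abs_div, abs_pow]
      have hf : |((n+1).factorial : ℝ)| = ((n:ℝ) + 1) * n.factorial := by
        rw [abs_of_pos (by positivity), Nat.factorial_succ]; push_cast; ring
      have h1 : |poch a (n+1)| ≤ poch (|a| + 1) (n+1) := abs_poch_le a (n+1)
      have h3 : |(((n:ℝ)) + 1)| = (n:ℝ) + 1 := abs_of_pos (by positivity)
      rw [hf, h3]
      have hfac : (0:ℝ) < n.factorial := by positivity
      have key : |poch a (n+1)| / (((n:ℝ) + 1) * n.factorial) * (((n:ℝ) + 1) * |y| ^ n)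
          = |poch a (n+1)| / n.factorial * |y| ^ n := by field_simp
      rw [key]
      have h5 : (0:ℝ) ≤ poch (|a| + 1) (n+1) / n.factorial := by
        have := poch_pos (show (0:ℝ) < |a|+1 by positivity) (n+1)
        positivity
      gcongr

    have hcast : ((n+1 : ℕ) : ℝ) = (n:ℝ) + 1 := by push_cast; ring
    show ‖poch a (n+1) / ((n+1).factorial : ℝ) * (((n+1 : ℕ):ℝ) * y ^ (n + 1 - 1))‖
        ≤ ubnd a r (n+1)
    rw [hcast]
    exact goal

noncomputable def binS (a u : ℝ) : ℝ := ∑' n : ℕ, poch a n / n.factorial * u ^ n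
noncomputable def binD (a u : ℝ) : ℝ :=
  ∑' n : ℕ, poch a n / n.factorial * ((n : ℝ) * u ^ (n - 1))

lemma hasDerivAt_binS (a : ℝ) {y : ℝ} (hy : |y| < 1) :
    HasDerivAt (binS a) (binD a y) y := by
  set r : ℝ := (|y| + 1) / 2 with hr
  have hyr : |y| < r := by rw [hr]; linarith [abs_nonneg y]
  have hr0 : 0 < r := lt_of_le_of_lt (abs_nonneg y) hyr
  have hr1 : r < 1 := by rw [hr]; linarith
  have hyt : y ∈ Ioo (-r) r := abs_lt.mp hyr
  exact hasDerivAt_tsum_of_isPreconnected (summable_ubnd a hr0 hr1)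
    isOpen_Ioo (convex_Ioo _ _).isPreconnected
    (fun n z _ => (hasDerivAt_pow n z).const_mul (poch a n / n.factorial))
    (fun n z hz => deriv_bound a (abs_lt.mpr ⟨hz.1, hz.2⟩).le n)
    (show (0:ℝ) ∈ Ioo (-r) r by constructor <;> [linarith; linarith])
    (summable_binom a (by simpa using one_pos))
    hyt

lemma summable_binD (a : ℝ) {y : ℝ} (hy : |y| < 1) :
    Summable (fun n : ℕ => poch a n / n.factorial * ((n : ℝ) * y ^ (n - 1))) := by
  set r : ℝ := (|y| + 1) / 2 with hr
  have hyr : |y| < r := by rw [hr]; linarith [abs_nonneg y]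
  have hr0 : 0 < r := lt_of_le_of_lt (abs_nonneg y) hyr
  have hr1 : r < 1 := by rw [hr]; linarith
  exact Summable.of_norm_bounded (summable_ubnd a hr0 hr1) (deriv_bound a hyr.le)

lemma ode_binS (a : ℝ) {y : ℝ} (hy : |y| < 1) :
    (1 - y) * binD a y = a * binS a y := by
  have hD := summable_binD a hy
  have hS := summable_binom a hy
  have hDs : Summable (fun n : ℕ => poch a (n+1) / (n+1).factorial * (((n:ℝ) + 1) * y ^ n)) := by
    have := (summable_nat_add_iff 1).mpr hD
    apply this.congr
    intro n
    simp
  -- binD = shifted sum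
  have e1 : binD a y = ∑' n : ℕ, poch a (n+1) / (n+1).factorial * (((n:ℝ)+1) * y ^ n) := by
    rw [binD, Summable.tsum_eq_zero_add hD]
    simp
  -- y * binD = ∑ poch a n / n! * n * y^n
  have e2 : y * binD a y = ∑' n : ℕ, poch a n / n.factorial * ((n:ℝ) * y ^ n) := by
    rw [binD, ← tsum_mul_left]
    congr 1
    funext n
    match n with
    | 0 => simp
    | n + 1 => show y * (_ * (_ * y ^ n)) = _ * (_ * y ^ (n+1)); ring
  have hS2 : Summable (fun n : ℕ => poch a n / n.factorial * ((n:ℝ) * y ^ n)) := by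
    have := hD.mul_left y
    rw [show (fun n : ℕ => y * (poch a n / n.factorial * ((n:ℝ) * y ^ (n-1))))
      = fun n : ℕ => y * (poch a n / n.factorial * ((n:ℝ) * y ^ (n-1))) from rfl] at this
    apply this.congr
    intro n
    match n with
    | 0 => simp
    | n + 1 => show y * (_ * (_ * y ^ n)) = _ * (_ * y ^ (n+1)); ring
  have key : ∀ n : ℕ, poch a (n+1) / (n+1).factorial * (((n:ℝ)+1) * y ^ n)
      - poch a n / n.factorial * ((n:ℝ) * y ^ n)
      = a * (poch a n / n.factorial * y ^ n) := by
    intro n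
    rw [poch_succ, Nat.factorial_succ]
    have h1 : ((n+1).factorial : ℝ) ≠ 0 := by positivity
    have h2 : (n.factorial : ℝ) ≠ 0 := by positivity
    push_cast
    field_simp
    ring
  have e3 : binD a y - y * binD a y
      = ∑' n : ℕ, a * (poch a n / n.factorial * y ^ n) := by
    rw [e2, e1, ← Summable.tsum_sub hDs hS2]
    congr 1
    funext n
    exact key n
  have e4 : ∑' n : ℕ, a * (poch a n / n.factorial * y ^ n) = a * binS a y := by
    rw [tsum_mul_left]; rfl
  calc (1 - y) * binD a y = binD a y - y * binD a y := by ring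
    _ = a * binS a y := by rw [e3, e4]

lemma binS_mul_rpow (a : ℝ) {y : ℝ} (hy : |y| < 1) :
    binS a y * (1 - y) ^ a = 1 := by
  have h1y : ∀ z : ℝ, |z| < 1 → (0:ℝ) < 1 - z := by
    intro z hz; have := (abs_lt.mp hz).2; linarith
  -- Φ has zero derivative on Ioo (-1) 1
  have hderiv : ∀ z ∈ Ioo (-1:ℝ) 1, HasDerivAt (fun w => binS a w * (1 - w) ^ a) 0 z := by
    intro z hz
    have hz' : |z| < 1 := abs_lt.mpr ⟨hz.1, hz.2⟩
    have hz0 : (0:ℝ) < 1 - z := h1y z hz'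
    have hS := hasDerivAt_binS a hz'
    have hrpow : HasDerivAt (fun w : ℝ => (1 - w) ^ a)
        (a * (1 - z) ^ (a - 1) * (-1)) z := by
      have h1 : HasDerivAt (fun w : ℝ => 1 - w) (-1) z := by
        simpa using (hasDerivAt_id z).const_sub 1
      have h2 : HasDerivAt (fun x : ℝ => x ^ a) (a * (1 - z) ^ (a - 1)) (1 - z) :=
        Real.hasDerivAt_rpow_const (Or.inl hz0.ne')
      exact h2.comp z h1
    have := hS.mul hrpow
    refine this.congr_deriv ?_
    have hode := ode_binS a hz'
    have hsplit : (1 - z) ^ a = (1 - z) ^ (a - 1) * (1 - z) := by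
      rw [← Real.rpow_add_one hz0.ne' (a - 1)]
      ring_nf
    rw [hsplit]
    have : binD a z * ((1 - z) ^ (a-1) * (1 - z))
        = ((1 - z) * binD a z) * (1 - z) ^ (a - 1) := by ring
    rw [this, hode]
    ring
  have hΦ0 : binS a 0 * (1 - 0 : ℝ) ^ a = 1 := by
    have : binS a 0 = 1 := by
      rw [binS]
      rw [tsum_eq_single 0]
      · simp [poch_zero]
      · intro n hn
        match n with
        | 0 => exact absurd rfl hn
        | n + 1 => simp
    rw [this]
    simp
  set Φ : ℝ → ℝ := fun w => binS a w * (1 - w) ^ a with hΦ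
  have hmem : ∀ z : ℝ, |z| < 1 → z ∈ Ioo (-1:ℝ) 1 := fun z hz => abs_lt.mp hz
  have hy' : y ∈ Ioo (-1:ℝ) 1 := hmem y hy
  rcases le_or_gt 0 y with h0y | h0y
  · have hsub : Icc (0:ℝ) y ⊆ Ioo (-1:ℝ) 1 := fun z hz =>
      ⟨by linarith [hz.1], lt_of_le_of_lt hz.2 hy'.2⟩
    have := constant_of_has_deriv_right_zero (f := Φ) (a := 0) (b := y)
      (fun z hz => ((hderiv z (hsub hz)).differentiableAt.continuousAt).continuousWithinAt)
      (fun z hz => (hderiv z (hsub (Ico_subset_Icc_self hz))).hasDerivWithinAt)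
      y ⟨h0y, le_refl y⟩
    show Φ y = 1
    rw [this]
    show binS a 0 * (1 - 0 : ℝ) ^ a = 1
    exact hΦ0
  · have hsub : Icc y (0:ℝ) ⊆ Ioo (-1:ℝ) 1 := fun z hz =>
      ⟨lt_of_lt_of_le hy'.1 hz.1, by linarith [hz.2]⟩
    have := constant_of_has_deriv_right_zero (f := Φ) (a := y) (b := 0)
      (fun z hz => ((hderiv z (hsub hz)).differentiableAt.continuousAt).continuousWithinAt)
      (fun z hz => (hderiv z (hsub (Ico_subset_Icc_self hz))).hasDerivWithinAt)
      0 ⟨h0y.le, le_refl 0⟩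
    show Φ y = 1
    rw [← this]
    show binS a 0 * (1 - 0 : ℝ) ^ a = 1
    exact hΦ0

theorem hasSum_binom (a : ℝ) {u : ℝ} (hu : |u| < 1) :
    HasSum (fun n : ℕ => poch a n / n.factorial * u ^ n) ((1 - u) ^ (-a)) := by
  have h0 : (0:ℝ) < 1 - u := by have := (abs_lt.mp hu).2; linarith
  have hkey := binS_mul_rpow a hu
  have hne : (1 - u) ^ a ≠ 0 := (Real.rpow_pos_of_pos h0 a).ne'
  have hval : binS a u = (1 - u) ^ (-a) := by
    rw [Real.rpow_neg h0.le]
    field_simp at hkey ⊢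
    linarith [hkey]
  have := (summable_binom a hu).hasSum
  rwa [show (∑' n : ℕ, poch a n / n.factorial * u ^ n) = binS a u from rfl, hval] at this

lemma cpow_eq_ofReal {x : ℝ} (hx : 0 ≤ x) (p : ℝ) :
    (x : ℂ) ^ ((p : ℂ) - 1) = ((x ^ (p - 1) : ℝ) : ℂ) := by
  rw [Complex.ofReal_cpow hx]
  norm_num

lemma beta_integrand_eq (p q : ℝ) {x : ℝ} (h0 : 0 ≤ x) (h1 : x ≤ 1) :
    (x : ℂ) ^ ((p : ℂ) - 1) * ((1 : ℂ) - x) ^ ((q : ℂ) - 1)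
      = ((x ^ (p - 1) * (1 - x) ^ (q - 1) : ℝ) : ℂ) := by
  rw [cpow_eq_ofReal h0 p]
  have h2 : ((1 : ℂ) - x) = ((1 - x : ℝ) : ℂ) := by push_cast; ring
  rw [h2, cpow_eq_ofReal (by linarith) q]
  push_cast
  ring

lemma beta_integrableOn {p q : ℝ} (hp : 0 < p) (hq : 0 < q) :
    IntegrableOn (fun x : ℝ => x ^ (p - 1) * (1 - x) ^ (q - 1)) (Ioc 0 1) := by
  have hc := Complex.betaIntegral_convergent (u := (p:ℂ)) (v := (q:ℂ)) (by simpa) (by simpa)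
  have hn := hc.norm
  rw [intervalIntegrable_iff_integrableOn_Ioc_of_le (by norm_num : (0:ℝ) ≤ 1)] at hn
  apply hn.congr_fun ?_ measurableSet_Ioc
  intro x hx
  show ‖(x:ℂ) ^ ((p:ℂ) - 1) * ((1:ℂ) - (x:ℂ)) ^ ((q:ℂ) - 1)‖ = x ^ (p - 1) * (1 - x) ^ (q - 1)
  rw [beta_integrand_eq p q hx.1.le hx.2]
  rw [Complex.norm_real, Real.norm_eq_abs]
  have h1 : (0:ℝ) ≤ x ^ (p - 1) := Real.rpow_nonneg hx.1.le _
  have h2 : (0:ℝ) ≤ (1 - x) ^ (q - 1) := Real.rpow_nonneg (by linarith [hx.2]) _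
  rw [abs_of_nonneg (by positivity)]

lemma beta_integral_eq {p q : ℝ} (hp : 0 < p) (hq : 0 < q) :
    ∫ x in Ioc (0:ℝ) 1, x ^ (p - 1) * (1 - x) ^ (q - 1) = Beta p q := by
  have key := Complex.Gamma_mul_Gamma_eq_betaIntegral (s := (p:ℂ)) (t := (q:ℂ))
    (by simpa) (by simpa)
  have hBI : Complex.betaIntegral p q
      = ((∫ x in (0:ℝ)..1, x ^ (p - 1) * (1 - x) ^ (q - 1) : ℝ) : ℂ) := by
    rw [Complex.betaIntegral, ← intervalIntegral.integral_ofReal]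
    apply intervalIntegral.integral_congr
    intro x hx
    rw [uIcc_of_le (by norm_num : (0:ℝ) ≤ 1)] at hx
    exact beta_integrand_eq p q hx.1 hx.2
  rw [hBI, show (p:ℂ) + (q:ℂ) = ((p + q : ℝ) : ℂ) by push_cast; ring,
    Complex.Gamma_ofReal, Complex.Gamma_ofReal, Complex.Gamma_ofReal] at key
  have key2 : Real.Gamma p * Real.Gamma q
      = Real.Gamma (p + q) * ∫ x in (0:ℝ)..1, x ^ (p - 1) * (1 - x) ^ (q - 1) := by
    exact_mod_cast key
  have hG : (0:ℝ) < Real.Gamma (p + q) := Real.Gamma_pos_of_pos (by linarith)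
  rw [← intervalIntegral.integral_of_le (by norm_num : (0:ℝ) ≤ 1)]
  rw [Beta, eq_div_iff hG.ne', key2]
  ring

lemma Gamma_add_nat {x : ℝ} (hx : 0 < x) (n : ℕ) :
    Real.Gamma (x + n) = Real.Gamma x * poch x n := by
  induction n with
  | zero => simp [poch_zero]
  | succ n ih =>
    have h1 : x + (n + 1 : ℕ) = (x + n) + 1 := by push_cast; ring
    rw [h1, Real.Gamma_add_one (by positivity), ih, poch_succ]
    ring

lemma Beta_shift {b c : ℝ} (hb : 0 < b) (hbc : b < c) (n : ℕ) :
    Beta (b + n) (c - b) = Beta b (c - b) * poch b n / poch c n := by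
  have hc : 0 < c := lt_trans hb hbc
  have h1 : b + (n:ℝ) + (c - b) = c + n := by ring
  rw [Beta, Beta, h1, Gamma_add_nat hb n, Gamma_add_nat hc n]
  have hGc : (0:ℝ) < Real.Gamma c := Real.Gamma_pos_of_pos hc
  have hpc : (0:ℝ) < poch c n := poch_pos hc n
  field_simp
  simp [hGc.ne']

theorem euler_integral_repr (a b c t : ℝ) (hb : 0 < b) (hbc : b < c) (ht : |t| < 1) :
    Beta b (c - b) * F21 a b c t
      = ∫ x in (0:ℝ)..1, (1 - t * x) ^ (-a) * x ^ (b - 1) * (1 - x) ^ (c - b - 1) := by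
  have hcb : 0 < c - b := by linarith
  set K : ℝ → ℝ := fun x => x ^ (b - 1) * (1 - x) ^ (c - b - 1) with hKdef
  set f : ℕ → ℝ → ℝ := fun n x => poch a n / n.factorial * (t * x) ^ n * K x with hfdef
  set M : ℕ → ℝ := fun n => poch (|a| + 1) n / n.factorial * |t| ^ n with hMdef
  have hKint : IntegrableOn K (Ioc 0 1) := beta_integrableOn hb hcb
  have hKnonneg : ∀ x ∈ Ioc (0:ℝ) 1, 0 ≤ K x := by
    intro x hx
    have h1 : (0:ℝ) ≤ x ^ (b - 1) := Real.rpow_nonneg hx.1.le _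
    have h2 : (0:ℝ) ≤ (1 - x) ^ (c - b - 1) := Real.rpow_nonneg (by linarith [hx.2]) _
    exact mul_nonneg h1 h2
  have htx : ∀ x ∈ Ioc (0:ℝ) 1, |t * x| < 1 := by
    intro x hx
    rw [abs_mul, abs_of_pos hx.1]
    calc |t| * x ≤ |t| * 1 := by
          apply mul_le_mul_of_nonneg_left hx.2 (abs_nonneg t)
      _ < 1 := by simpa using ht
  have hBetaPos : 0 < Beta b (c - b) := by
    rw [Beta]
    have g1 := Real.Gamma_pos_of_pos hb
    have g2 := Real.Gamma_pos_of_pos hcb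
    have g3 := Real.Gamma_pos_of_pos (show (0:ℝ) < b + (c - b) by linarith)
    positivity
  have hMnonneg : ∀ n, 0 ≤ M n := by
    intro n
    have := poch_pos (show (0:ℝ) < |a| + 1 by positivity) n
    have h2 : (0:ℝ) < n.factorial := by positivity
    rw [hMdef]
    positivity
  have hMsum : Summable M := by
    have := summable_binom (|a| + 1) (u := |t|) (by rwa [abs_abs])
    exact this
  -- measurability
  have hmeas : ∀ n, AEStronglyMeasurable (f n) (volume.restrict (Ioc 0 1)) := by
    intro n
    apply Measurable.aestronglyMeasurable
    rw [hfdef, hKdef]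
    exact (measurable_const.mul ((measurable_const.mul measurable_id).pow_const n)).mul
      ((measurable_id.pow_const (b-1)).mul
        ((measurable_const.sub measurable_id).pow_const (c-b-1)))
  -- pointwise bound
  have hbound : ∀ n, ∀ x ∈ Ioc (0:ℝ) 1, ‖f n x‖ ≤ M n * K x := by
    intro n x hx
    rw [Real.norm_eq_abs, hfdef, hMdef]
    simp only
    rw [abs_mul, abs_mul, abs_div, abs_pow, abs_of_nonneg (hKnonneg x hx),
      abs_of_pos (show (0:ℝ) < (n.factorial:ℝ) by positivity)]
    have h1 : |poch a n| ≤ poch (|a| + 1) n := abs_poch_le a n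
    have h2 : |t * x| ^ n ≤ |t| ^ n := by
      apply pow_le_pow_left₀ (abs_nonneg _)
      rw [abs_mul, abs_of_pos hx.1]
      calc |t| * x ≤ |t| * 1 := mul_le_mul_of_nonneg_left hx.2 (abs_nonneg t)
        _ = |t| := mul_one _
    have hfac : (0:ℝ) < (n.factorial:ℝ) := by positivity
    have hposh : (0:ℝ) ≤ poch (|a| + 1) n / n.factorial :=
      le_of_lt (div_pos (poch_pos (by positivity) n) hfac)
    gcongr
    exact hKnonneg x hx
  -- integrability of each f n
  have hfint : ∀ n, IntegrableOn (f n) (Ioc 0 1) := by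
    intro n
    apply Integrable.mono' (hKint.const_mul (M n)) (hmeas n)
    rw [ae_restrict_iff' measurableSet_Ioc]
    exact Filter.Eventually.of_forall (fun x hx => hbound n x hx)
  -- lintegral bound
  have hlintsum : ∑' n, ∫⁻ x in Ioc (0:ℝ) 1, ‖f n x‖₊ ≠ ⊤ := by
    have hle : ∀ n, ∫⁻ x in Ioc (0:ℝ) 1, ‖f n x‖₊
        ≤ ENNReal.ofReal (M n * Beta b (c - b)) := by
      intro n
      have step1 : ∫⁻ x in Ioc (0:ℝ) 1, ‖f n x‖₊
          ≤ ∫⁻ x in Ioc (0:ℝ) 1, ENNReal.ofReal (M n * K x) := by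
        apply lintegral_mono_ae
        rw [ae_restrict_iff' measurableSet_Ioc]
        apply Filter.Eventually.of_forall
        intro x hx
        rw [← enorm_eq_nnnorm, ← ofReal_norm]
        exact ENNReal.ofReal_le_ofReal (hbound n x hx)
      have step2 : ∫⁻ x in Ioc (0:ℝ) 1, ENNReal.ofReal (M n * K x)
          = ENNReal.ofReal (∫ x in Ioc (0:ℝ) 1, M n * K x) := by
        rw [← ofReal_integral_eq_lintegral_ofReal (hKint.const_mul (M n))]
        filter_upwards [ae_restrict_mem measurableSet_Ioc] with x hx
        exact mul_nonneg (hMnonneg n) (hKnonneg x hx)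
      have step3 : ∫ x in Ioc (0:ℝ) 1, M n * K x = M n * Beta b (c - b) := by
        rw [integral_const_mul]
        congr 1
        exact beta_integral_eq hb hcb
      rw [step2, step3] at step1
      exact step1
    apply ne_of_lt
    calc ∑' n, ∫⁻ x in Ioc (0:ℝ) 1, ‖f n x‖₊
        ≤ ∑' n, ENNReal.ofReal (M n * Beta b (c - b)) := ENNReal.tsum_le_tsum hle
      _ = ENNReal.ofReal (∑' n, M n * Beta b (c - b)) := by
          rw [ENNReal.ofReal_tsum_of_nonneg
            (fun n => mul_nonneg (hMnonneg n) hBetaPos.le) (hMsum.mul_right _)]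
      _ < ⊤ := ENNReal.ofReal_lt_top
  -- pointwise identity on Ioc
  have hpt : EqOn (fun x : ℝ => (1 - t * x) ^ (-a) * x ^ (b - 1) * (1 - x) ^ (c - b - 1))
      (fun x => ∑' n, f n x) (Ioc 0 1) := by
    intro x hx
    have hs := hasSum_binom a (htx x hx)
    simp only
    calc (1 - t * x) ^ (-a) * x ^ (b - 1) * (1 - x) ^ (c - b - 1)
        = (∑' n : ℕ, poch a n / n.factorial * (t * x) ^ n) * K x := by
          rw [hs.tsum_eq, hKdef]; ring
      _ = ∑' n, f n x := by
          rw [← tsum_mul_right]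
  -- value of each integral
  have hval : ∀ n : ℕ, ∫ x in Ioc (0:ℝ) 1, f n x
      = Beta b (c - b) * (poch a n * poch b n / (poch c n * n.factorial) * t ^ n) := by
    intro n
    have heq : EqOn (f n)
        (fun x => (poch a n / n.factorial * t ^ n) *
          (x ^ (b + (n:ℝ) - 1) * (1 - x) ^ (c - b - 1))) (Ioc 0 1) := by
      intro x hx
      simp only [hfdef, hKdef]
      rw [mul_pow]
      have hxp : (x : ℝ) ^ (n:ℕ) = x ^ ((n:ℝ)) := (Real.rpow_natCast x n).symm
      rw [hxp]
      have : x ^ ((n:ℝ)) * x ^ (b - 1) = x ^ (b + (n:ℝ) - 1) := by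
        rw [← Real.rpow_add hx.1]
        ring_nf
      calc poch a n / n.factorial * (t ^ n * x ^ ((n:ℝ))) * (x ^ (b-1) * (1-x) ^ (c-b-1))
          = poch a n / n.factorial * t ^ n * ((x ^ ((n:ℝ)) * x ^ (b-1)) * (1-x) ^ (c-b-1)) := by
            ring
        _ = _ := by rw [this]
    rw [setIntegral_congr_fun measurableSet_Ioc heq, integral_const_mul]
    have hbn : (0:ℝ) < b + n := by positivity
    have := beta_integral_eq hbn hcb
    rw [this, Beta_shift hb hbc n]
    have hc : (0:ℝ) < c := lt_trans hb hbc
    have hpc : (0:ℝ) < poch c n := poch_pos hc n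
    have hfac : (0:ℝ) < (n.factorial : ℝ) := by positivity
    field_simp
  -- assemble
  rw [intervalIntegral.integral_of_le (by norm_num : (0:ℝ) ≤ 1)]
  rw [setIntegral_congr_fun measurableSet_Ioc hpt]
  rw [integral_tsum hmeas hlintsum]
  rw [tsum_congr hval, tsum_mul_left]
  rfl
end

section
/- Gauss–Manin system identity: let 0 < α, β < 1 with α ≠ β, and set f(t) = t^{β−α}·₂F₁(1−α, β; 1−α+β; t) and g(t) = t^{β−α}·₂F₁(1−α, β−1; 1−α+β; t) for 0 < t < 1. Then t·f'(t) = −(1−β)·f(t) + (1−α)·(1−t)^{−1}·g(t) and t·g'(t) = −(1−β)·f(t) + (1−α)·g(t). -/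
open scoped BigOperators
open Real MeasureTheory Filter Set

lemma poch_one_sub (b : ℝ) (n : ℕ) : poch (b - 1) (n + 1) = (b - 1) * poch b n := by
  rw [poch, Finset.prod_range_succ']
  simp only [Nat.cast_zero, add_zero, Nat.cast_add, Nat.cast_one]
  rw [mul_comm, poch]
  congr 1
  apply Finset.prod_congr rfl
  intro i _
  ring

lemma poch_abs_bound {a b c : ℝ} (ha0 : 0 < a) (ha1 : a ≤ 1) (hc : 0 < c)
    (hbc : b ≤ c) (hb1 : -1 ≤ b) (hab : |a * b| ≤ c) (n : ℕ) :
    |poch a n * poch b n| ≤ poch c n * n.factorial := by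
  induction n with
  | zero => simp [poch_zero]
  | succ m ih =>
    have hkey : |(a + m) * (b + m)| ≤ (c + m) * (m + 1) := by
      rcases Nat.eq_zero_or_pos m with hm | hm
      · subst hm; simpa using hab
      · have hm1 : (1 : ℝ) ≤ (m : ℝ) := by exact_mod_cast hm
        have h1 : 0 < a + m := by linarith
        have h2 : 0 ≤ b + m := by linarith
        rw [abs_of_nonneg (by positivity)]
        have : a + m ≤ m + 1 := by linarith
        have : b + m ≤ c + m := by linarith
        nlinarith
    rw [poch_succ, poch_succ, poch_succ]
    have : |poch a m * (a + m) * (poch b m * (b + m))|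
        = |poch a m * poch b m| * |(a + m) * (b + m)| := by
      rw [← abs_mul]; ring_nf
    rw [this]
    rw [Nat.factorial_succ]
    push_cast
    calc |poch a m * poch b m| * |(a + m) * (b + m)|
        ≤ (poch c m * m.factorial) * ((c + m) * (m + 1)) := by
          apply mul_le_mul ih hkey (abs_nonneg _)
          exact (mul_pos (poch_pos hc m) (by positivity)).le
      _ = poch c m * (c + m) * ((m + 1) * m.factorial) := by ring

lemma summable_geom_of_abs_le_one {u : ℕ → ℝ} (hu : ∀ n, |u n| ≤ 1) {x : ℝ}
    (hx : |x| < 1) : Summable (fun n => u n * x ^ n) := by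
  apply Summable.of_norm_bounded (g := fun n => |x| ^ n) (summable_geometric_of_lt_one (abs_nonneg x) hx)
  intro n
  rw [Real.norm_eq_abs, abs_mul, abs_pow]
  calc |u n| * |x| ^ n ≤ 1 * |x| ^ n := by
        apply mul_le_mul_of_nonneg_right (hu n) (by positivity)
    _ = |x| ^ n := one_mul _

lemma summable_n_geom_of_abs_le_one {u : ℕ → ℝ} (hu : ∀ n, |u n| ≤ 1) {x : ℝ}
    (hx : |x| < 1) : Summable (fun n : ℕ => (n : ℝ) * u n * x ^ n) := by
  have h := summable_pow_mul_geometric_of_norm_lt_one (R := ℝ) 1 (r := |x|)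
    (by rwa [Real.norm_eq_abs, abs_abs])
  apply Summable.of_norm_bounded h
  intro n
  rw [Real.norm_eq_abs, abs_mul, abs_mul, abs_pow, Nat.abs_cast, pow_one]
  calc (n : ℝ) * |u n| * |x| ^ n ≤ (n : ℝ) * 1 * |x| ^ n := by
        apply mul_le_mul_of_nonneg_right _ (by positivity)
        apply mul_le_mul_of_nonneg_left (hu n) (by positivity)
    _ = (n : ℝ) * |x| ^ n := by ring

lemma hasDerivAt_power_series {u : ℕ → ℝ} (hu : ∀ n, |u n| ≤ 1) {t : ℝ}
    (ht0 : 0 < t) (ht1 : t < 1) :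
    HasDerivAt (fun s => ∑' n, u n * s ^ n) (∑' n, u n * (n * t ^ (n - 1))) t := by
  set r : ℝ := (1 + t) / 2 with hr
  have hr0 : 0 < r := by rw [hr]; linarith
  have hr1 : r < 1 := by rw [hr]; linarith
  have htr : t < r := by rw [hr]; linarith
  have hsum : Summable (fun n : ℕ => (n : ℝ) * r ^ n / r) := by
    apply Summable.div_const
    simpa [pow_one] using summable_pow_mul_geometric_of_norm_lt_one (R := ℝ) 1
      (r := r) (by rw [Real.norm_eq_abs, abs_of_pos hr0]; exact hr1)
  apply hasDerivAt_tsum_of_isPreconnected (g := fun n s => u n * s ^ n)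
    (g' := fun n y => u n * ((n : ℝ) * y ^ (n - 1))) hsum (isOpen_Ioo (a := -r) (b := r))
    (isPreconnected_Ioo) (fun n y _ => ((hasDerivAt_pow n y).const_mul (u n)))
    ?_ (show t ∈ Ioo (-r) r from ⟨by linarith, htr⟩)
    (summable_geom_of_abs_le_one hu (by rw [abs_of_pos ht0]; exact ht1))
    (show t ∈ Ioo (-r) r from ⟨by linarith, htr⟩)
  intro n y hy
  have hyr : |y| ≤ r := by
    rw [abs_le]; exact ⟨hy.1.le, hy.2.le⟩
  rw [Real.norm_eq_abs, abs_mul, abs_mul, abs_pow, Nat.abs_cast]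
  rcases Nat.eq_zero_or_pos n with h0 | hpos
  · subst h0; simp
  · have : |y| ^ (n - 1) ≤ r ^ (n - 1) := pow_le_pow_left₀ (abs_nonneg y) hyr _
    calc |u n| * ((n : ℝ) * |y| ^ (n - 1)) ≤ 1 * ((n : ℝ) * r ^ (n - 1)) := by
          apply mul_le_mul (hu n) _ (by positivity) zero_le_one
          exact mul_le_mul_of_nonneg_left this (by positivity)
      _ = (n : ℝ) * r ^ (n - 1) := one_mul _
      _ = (n : ℝ) * r ^ n / r := by
          obtain ⟨m, rfl⟩ := Nat.exists_eq_succ_of_ne_zero hpos.ne'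
          rw [Nat.succ_sub_one, pow_succ]
          field_simp

noncomputable def gmu (a b c : ℝ) (n : ℕ) : ℝ := poch a n * poch b n / (poch c n * n.factorial)

lemma F21_eq (a b c t : ℝ) : F21 a b c t = ∑' n, gmu a b c n * t ^ n := rfl

lemma gmu_zero (a b c : ℝ) : gmu a b c 0 = 1 := by simp [gmu, poch_zero]

lemma gmu1_bound {α β : ℝ} (hα0 : 0 < α) (hα1 : α < 1) (hβ0 : 0 < β) (hβ1 : β < 1)
    (n : ℕ) : |gmu (1 - α) β (1 - α + β) n| ≤ 1 := by
  have hden : (0:ℝ) < poch (1 - α + β) n * n.factorial :=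
    mul_pos (poch_pos (by linarith) n) (by positivity)
  rw [gmu, abs_div, abs_of_pos hden, div_le_one hden]
  apply poch_abs_bound (by linarith) (by linarith) (by linarith) (by linarith) (by linarith)
  rw [abs_of_nonneg (by nlinarith)]
  nlinarith

lemma gmu2_bound {α β : ℝ} (hα0 : 0 < α) (hα1 : α < 1) (hβ0 : 0 < β) (hβ1 : β < 1)
    (n : ℕ) : |gmu (1 - α) (β - 1) (1 - α + β) n| ≤ 1 := by
  have hden : (0:ℝ) < poch (1 - α + β) n * n.factorial :=
    mul_pos (poch_pos (by linarith) n) (by positivity)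
  rw [gmu, abs_div, abs_of_pos hden, div_le_one hden]
  apply poch_abs_bound (by linarith) (by linarith) (by linarith) (by linarith) (by linarith)
  rw [abs_of_nonpos (by nlinarith)]
  nlinarith

lemma coeff_rel2 (α β : ℝ) (hc0 : 0 < 1 - α + β) (n : ℕ) :
    (n : ℝ) * gmu (1 - α) (β - 1) (1 - α + β) n
      = (1 - β) * (gmu (1 - α) (β - 1) (1 - α + β) n - gmu (1 - α) β (1 - α + β) n) := by
  cases n with
  | zero => simp [gmu_zero]
  | succ m =>
    have h1 : poch (1 - α + β) (m + 1) ≠ 0 := (poch_pos hc0 _).ne'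
    have h2 : ((m + 1).factorial : ℝ) ≠ 0 := by positivity
    simp only [gmu, poch_one_sub, poch_succ β m]
    push_cast
    field_simp
    ring

lemma coeff_rel1 (α β : ℝ) (hc0 : 0 < 1 - α + β) (n : ℕ) :
    ((1 - α) + ((n : ℝ) + 1)) * gmu (1 - α) β (1 - α + β) (n + 1)
      = (1 - α) * gmu (1 - α) (β - 1) (1 - α + β) (n + 1)
        + ((1 - α) + n) * gmu (1 - α) β (1 - α + β) n := by
  have hc := poch_pos hc0 n
  have hcn : (1 - α + β) + (n : ℝ) ≠ 0 := by positivity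
  have hf : ((n.factorial : ℕ) : ℝ) ≠ 0 := by positivity
  simp only [gmu, poch_succ (1 - α), poch_succ β, poch_one_sub, poch_succ (1 - α + β),
    Nat.factorial_succ]
  push_cast
  field_simp
  ring

lemma tsum_t_mul_deriv (u : ℕ → ℝ) (t : ℝ) :
    t * ∑' n, u n * ((n : ℝ) * t ^ (n - 1)) = ∑' n : ℕ, (n : ℝ) * u n * t ^ n := by
  rw [← tsum_mul_left]
  apply tsum_congr
  intro n
  cases n with
  | zero => simp
  | succ m =>
    rw [Nat.succ_sub_one, pow_succ]
    push_cast
    ring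
theorem gauss_manin_first_row (α β t : ℝ) (hα0 : 0 < α) (hα1 : α < 1) (hβ0 : 0 < β)
    (hβ1 : β < 1) (hαβ : α ≠ β) (ht0 : 0 < t) (ht1 : t < 1) :
    (t * deriv (fun s => s ^ (β - α) * F21 (1 - α) β (1 - α + β) s) t
      = -(1 - β) * (t ^ (β - α) * F21 (1 - α) β (1 - α + β) t)
        + (1 - α) * (1 - t)⁻¹ * (t ^ (β - α) * F21 (1 - α) (β - 1) (1 - α + β) t)) ∧
    (t * deriv (fun s => s ^ (β - α) * F21 (1 - α) (β - 1) (1 - α + β) s) t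
      = -(1 - β) * (t ^ (β - α) * F21 (1 - α) β (1 - α + β) t)
        + (1 - α) * (t ^ (β - α) * F21 (1 - α) (β - 1) (1 - α + β) t)) := by
  have hc0 : (0:ℝ) < 1 - α + β := by linarith
  have h1t : (1:ℝ) - t ≠ 0 := ne_of_gt (by linarith)
  have habs : |t| < 1 := by rw [abs_of_pos ht0]; exact ht1
  have hu1 : ∀ n, |gmu (1 - α) β (1 - α + β) n| ≤ 1 := gmu1_bound hα0 hα1 hβ0 hβ1
  have hu2 : ∀ n, |gmu (1 - α) (β - 1) (1 - α + β) n| ≤ 1 := gmu2_bound hα0 hα1 hβ0 hβ1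
  set u1 : ℕ → ℝ := gmu (1 - α) β (1 - α + β) with hu1d
  set u2 : ℕ → ℝ := gmu (1 - α) (β - 1) (1 - α + β) with hu2d
  have Sg1 : Summable (fun n => u1 n * t ^ n) := summable_geom_of_abs_le_one hu1 habs
  have Sg2 : Summable (fun n => u2 n * t ^ n) := summable_geom_of_abs_le_one hu2 habs
  have Sn1 : Summable (fun n : ℕ => (n : ℝ) * u1 n * t ^ n) := summable_n_geom_of_abs_le_one hu1 habs
  set F1 : ℝ := ∑' n, u1 n * t ^ n with hF1
  set F2 : ℝ := ∑' n, u2 n * t ^ n with hF2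
  set D1 : ℝ := ∑' n, u1 n * ((n : ℝ) * t ^ (n - 1)) with hD1
  set D2 : ℝ := ∑' n, u2 n * ((n : ℝ) * t ^ (n - 1)) with hD2
  -- derivatives
  have hder1 : deriv (fun s => s ^ (β - α) * F21 (1 - α) β (1 - α + β) s) t
      = (β - α) * t ^ (β - α - 1) * F1 + t ^ (β - α) * D1 := by
    have h := (Real.hasDerivAt_rpow_const (p := β - α) (Or.inl ht0.ne')).mul
      (hasDerivAt_power_series hu1 ht0 ht1)
    exact h.deriv
  have hder2 : deriv (fun s => s ^ (β - α) * F21 (1 - α) (β - 1) (1 - α + β) s) t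
      = (β - α) * t ^ (β - α - 1) * F2 + t ^ (β - α) * D2 := by
    have h := (Real.hasDerivAt_rpow_const (p := β - α) (Or.inl ht0.ne')).mul
      (hasDerivAt_power_series hu2 ht0 ht1)
    exact h.deriv
  have hFe1 : F21 (1 - α) β (1 - α + β) t = F1 := rfl
  have hFe2 : F21 (1 - α) (β - 1) (1 - α + β) t = F2 := rfl
  -- key series identity A (second row)
  have hA : t * D2 = (1 - β) * (F2 - F1) := by
    rw [hD2, tsum_t_mul_deriv, hF1, hF2, ← Summable.tsum_sub Sg2 Sg1, ← tsum_mul_left]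
    apply tsum_congr
    intro n
    have h := coeff_rel2 α β hc0 n
    rw [← hu1d, ← hu2d] at h
    calc (n : ℝ) * u2 n * t ^ n = ((n : ℝ) * u2 n) * t ^ n := by ring
      _ = ((1 - β) * (u2 n - u1 n)) * t ^ n := by rw [h]
      _ = (1 - β) * (u2 n * t ^ n - u1 n * t ^ n) := by ring
  -- key series identity B (first row)
  have hB : (1 - t) * ((1 - α) * F1 + t * D1) = (1 - α) * F2 := by
    set P : ℕ → ℝ := fun n => ((1 - α) + (n : ℝ)) * u1 n * t ^ n with hPd
    have SP : Summable P := by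
      apply ((Sg1.mul_left (1 - α)).add Sn1).congr
      intro n
      simp only [hPd]
      ring
    have hT : (1 - α) * F1 + t * D1 = ∑' n, P n := by
      rw [hD1, tsum_t_mul_deriv, hF1, ← tsum_mul_left, ← Summable.tsum_add (Sg1.mul_left (1 - α)) Sn1]
      apply tsum_congr
      intro n
      simp only [hPd]
      ring
    set Q : ℕ → ℝ := fun n => (1 - α) * (u2 n * t ^ n) with hQd
    have SQ : Summable Q := Sg2.mul_left _
    have hQ : (1 - α) * F2 = ∑' n, Q n := by
      rw [hF2, ← tsum_mul_left]
    have key : ∑' n, P n = (∑' n, Q n) + t * ∑' n, P n := by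
      have SQ1 : Summable (fun n => Q (n + 1)) := (summable_nat_add_iff 1).2 SQ
      have StP : Summable (fun n => t * P n) := SP.mul_left t
      have e1 : t * ∑' n, P n = ∑' n, t * P n := tsum_mul_left.symm
      rw [e1, Summable.tsum_eq_zero_add SP, Summable.tsum_eq_zero_add SQ, add_assoc, ← Summable.tsum_add SQ1 StP]
      have h0 : P 0 = Q 0 := by
        simp only [hPd, hQd, hu1d, hu2d, gmu_zero]
        norm_num
      rw [h0]
      congr 1
      apply tsum_congr
      intro n
      have h := coeff_rel1 α β hc0 n
      rw [← hu1d, ← hu2d] at h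
      simp only [hPd, hQd]
      push_cast
      linear_combination (t : ℝ) ^ (n + 1) * h
    rw [hT, hQ]
    linear_combination key
  have hπ : (0:ℝ) < t ^ (β - α) := Real.rpow_pos_of_pos ht0 _
  have htp : t ^ (β - α - 1) * t = t ^ (β - α) := by
    have h : β - α = (β - α - 1) + 1 := by ring
    rw [h, Real.rpow_add_one ht0.ne']
    ring_nf
  constructor
  · rw [hder1, hFe1, hFe2]
    have inner : (β - α) * F1 + t * D1 = -(1 - β) * F1 + (1 - α) * (1 - t)⁻¹ * F2 := by
      have hB' : (1 - α) * F1 + t * D1 = (1 - α) * (1 - t)⁻¹ * F2 := by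
        field_simp
        linear_combination hB
      linear_combination hB'
    calc t * ((β - α) * t ^ (β - α - 1) * F1 + t ^ (β - α) * D1)
        = t ^ (β - α) * ((β - α) * F1 + t * D1) := by rw [← htp]; ring
      _ = t ^ (β - α) * (-(1 - β) * F1 + (1 - α) * (1 - t)⁻¹ * F2) := by rw [inner]
      _ = -(1 - β) * (t ^ (β - α) * F1) + (1 - α) * (1 - t)⁻¹ * (t ^ (β - α) * F2) := by ring
  · rw [hder2, hFe1, hFe2]
    have inner : (β - α) * F2 + t * D2 = -(1 - β) * F1 + (1 - α) * F2 := by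
      linear_combination hA
    calc t * ((β - α) * t ^ (β - α - 1) * F2 + t ^ (β - α) * D2)
        = t ^ (β - α) * ((β - α) * F2 + t * D2) := by rw [← htp]; ring
      _ = t ^ (β - α) * (-(1 - β) * F1 + (1 - α) * F2) := by rw [inner]
      _ = -(1 - β) * (t ^ (β - α) * F1) + (1 - α) * (t ^ (β - α) * F2) := by ring
end
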